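/- For a Lie antialgebra A, the bracket on ovs(A) is well-defined and super-skewsymmetric on odd elements: for a, b, c ∈ A_1 and x ∈ A_0, the expression [a⊙b, c] := a(bc) + b(ac) is balanced, i.e. (ax)⊙b and a⊙(bx) give the same value: (ax)·(bc) + b·((ax)c) = a·((bx)c) + (bx)·(ac). Prove this identity from the Lie antialgebra axioms (LA1), (LA2), (LA3) and supercommutativity. -/
import Mathlib


/-- in a Lie antialgebra `A = A₀ ⊕ A₁`, for `a, b, c ∈ A₁` and
`x ∈ A₀`, the balancing identity `(ax)(bc) + b((ax)c) = a((bx)c) + (bx)(ac)` holds;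
this is what makes the bracket `[a⊙b, c] = a(bc) + b(ac)` of `ovs(A)` well defined. -/
theorem stmt_19 (V : Type*) [AddCommGroup V] [Module ℂ V]
    (m : V →ₗ[ℂ] V →ₗ[ℂ] V) (A0 A1 : Submodule ℂ V)
    (h00 : ∀ x y, x ∈ A0 → y ∈ A0 → m x y ∈ A0)
    (h01 : ∀ x y, x ∈ A0 → y ∈ A1 → m x y ∈ A1)
    (h10 : ∀ x y, x ∈ A1 → y ∈ A0 → m x y ∈ A1)
    (h11 : ∀ x y, x ∈ A1 → y ∈ A1 → m x y ∈ A0)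
    (hc00 : ∀ x y, x ∈ A0 → y ∈ A0 → m x y = m y x)
    (hc01 : ∀ x y, x ∈ A0 → y ∈ A1 → m x y = m y x)
    (hc11 : ∀ y z, y ∈ A1 → z ∈ A1 → m y z = - m z y)
    (hLA0 : ∀ x1 x2 x3, x1 ∈ A0 → x2 ∈ A0 → x3 ∈ A0 →
      m x1 (m x2 x3) = m (m x1 x2) x3)
    (hLA1 : ∀ x1 x2 y, x1 ∈ A0 → x2 ∈ A0 → y ∈ A1 →
      m x1 (m x2 y) = (1/2 : ℂ) • m (m x1 x2) y)
    (hLA2 : ∀ x y1 y2, x ∈ A0 → y1 ∈ A1 → y2 ∈ A1 →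
      m x (m y1 y2) = m (m x y1) y2 + m y1 (m x y2))
    (hLA3 : ∀ y1 y2 y3, y1 ∈ A1 → y2 ∈ A1 → y3 ∈ A1 →
      m y1 (m y2 y3) + m y2 (m y3 y1) + m y3 (m y1 y2) = 0)
    (a b c x : V) (ha : a ∈ A1) (hb : b ∈ A1) (hc : c ∈ A1) (hx : x ∈ A0) :
    m (m a x) (m b c) + m b (m (m a x) c) =
      m a (m (m b x) c) + m (m b x) (m a c) := by
  -- helper: for u even, y odd: y(xu) = 2 • x(yu)
  have H1 : ∀ u y, u ∈ A0 → y ∈ A1 → m y (m x u) = (2:ℂ) • m x (m y u) := by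
    intro u y hu hy
    have h1 := hLA1 x u y hx hu hy
    rw [hc01 u y hu hy, hc01 (m x u) y (h00 x u hx hu) hy] at h1
    rw [h1, smul_smul]
    norm_num
  -- helper: for u even, y odd: (yx)u = x(yu)
  have L1 : ∀ u y, u ∈ A0 → y ∈ A1 → m (m y x) u = m x (m y u) := by
    intro u y hu hy
    have e1 : m (m y x) u = m u (m y x) := (hc01 u (m y x) hu (h10 y x hy hx)).symm
    have e2 : m y x = m x y := (hc01 x y hx hy).symm
    have e3 := hLA1 u x y hu hx hy
    have e4 : m u x = m x u := hc00 u x hu hx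
    have e5 : m (m x u) y = m y (m x u) := hc01 (m x u) y (h00 x u hx hu) hy
    rw [e1, e2, e3, e4, e5, H1 u y hu hy, smul_smul]
    norm_num
  -- helper: (yx)z = x(yz) - y(zx) for y z odd
  have L2 : ∀ y z, y ∈ A1 → z ∈ A1 → m (m y x) z = m x (m y z) - m y (m z x) := by
    intro y z hy hz
    have e := hLA2 x y z hx hy hz
    rw [hc01 x y hx hy, hc01 x z hx hz] at e
    rw [e]; abel
  have hA : m (m a x) (m b c) = m x (m a (m b c)) := L1 (m b c) a (h11 b c hb hc) ha
  have hD : m (m b x) (m a c) = m x (m b (m a c)) := L1 (m a c) b (h11 a c ha hc) hb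
  have hB : m b (m (m a x) c) = (2:ℂ) • m x (m b (m a c)) - m b (m a (m c x)) := by
    rw [L2 a c ha hc, map_sub, H1 (m a c) b (h11 a c ha hc) hb]
  have hC : m a (m (m b x) c) = (2:ℂ) • m x (m a (m b c)) - m a (m b (m c x)) := by
    rw [L2 b c hb hc, map_sub, H1 (m b c) a (h11 b c hb hc) ha]
  -- from (LA3) applied to a, b, cx
  have hE : m b (m a (m c x)) - m a (m b (m c x)) = m x (m c (m a b)) := by
    have e := hLA3 a b (m c x) ha hb (h10 c x hc hx)
    rw [hc11 (m c x) a (h10 c x hc hx) ha, map_neg,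
      L1 (m a b) c (h11 a b ha hb) hc] at e
    linear_combination (norm := module) -e
  -- from (LA3) applied to a, b, c
  have hF : m x (m b (m a c)) - m x (m a (m b c)) = m x (m c (m a b)) := by
    have e := hLA3 a b c ha hb hc
    rw [hc11 c a hc ha, map_neg] at e
    have e2 : m b (m a c) - m a (m b c) = m c (m a b) := by
      linear_combination (norm := module) -e
    calc m x (m b (m a c)) - m x (m a (m b c))
        = m x (m b (m a c) - m a (m b c)) := (map_sub _ _ _).symm
      _ = m x (m c (m a b)) := by rw [e2]
  have key : m b (m a (m c x)) - m a (m b (m c x))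
      = m x (m b (m a c)) - m x (m a (m b c)) := hE.trans hF.symm
  rw [hA, hB, hC, hD]
  linear_combination (norm := module) -key
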